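/- Let F(x,y) = ((x − s(y))/2 + (√3/2)y, −(√3/2)(x − s(y)) + y/2). For every (x,y) ∈ U = ℝ² ∖ 𝔉 with c = V(x,y): if c is even, then F^{9c+6}(x,y) = (x,y), and if c is odd, then F^{18c+12}(x,y) = (x,y). In particular every point of the zero-free set U is periodic under F. -/

import Mathlib

noncomputable def s (y : ℝ) : ℝ := if 0 ≤ y then 1 else -1

/-- The map `F_α` of the paper for `α = π/3`. -/
noncomputable def F (q : ℝ × ℝ) : ℝ × ℝ :=
  ((q.1 - s q.2) / 2 + (Real.sqrt 3 / 2) * q.2,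
   -(Real.sqrt 3 / 2) * (q.1 - s q.2) + q.2 / 2)

noncomputable def B (q : ℝ × ℝ) : ℤ := ⌊(3 * q.1 - Real.sqrt 3 * q.2 + 3) / 6⌋
noncomputable def C (q : ℝ × ℝ) : ℤ := ⌊Real.sqrt 3 * q.2 / 3⌋
noncomputable def D (q : ℝ × ℝ) : ℤ := ⌊(3 * q.1 + Real.sqrt 3 * q.2) / 6⌋

noncomputable def V (q : ℝ × ℝ) : ℤ :=
  max (max (|B q - C q + D q|) (|B q + C q + D q + 1| - 1))
    (|-B q + C q + D q + 1| - 1)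

namespace PFaux

def ringE (t : ℕ) (s : ℤ) : ℤ × ℤ :=
  if s ≤ t then ((t:ℤ), t - s)
  else if s ≤ 2*t then (2*t - s, t - s)
  else if s ≤ 3*t+1 then (2*t - s, -(t:ℤ)-1)
  else if s ≤ 4*t+1 then (-(t:ℤ)-1, s - 4*t-2)
  else if s ≤ 5*t+1 then (s - 5*t-2, s - 4*t-2)
  else (s - 5*t-2, (t:ℤ))

lemma ringE_eq1 (t : ℕ) (s : ℤ) (h : s ≤ t) : ringE t s = ((t:ℤ), t - s) := if_pos h

lemma ringE_eq2 (t : ℕ) (s : ℤ) (h0 : t < s) (h : s ≤ 2*t) :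
    ringE t s = (2*t - s, t - s) := by
  rw [ringE, if_neg (by omega), if_pos h]

lemma ringE_eq3 (t : ℕ) (s : ℤ) (h0 : 2*t < s) (h : s ≤ 3*t+1) :
    ringE t s = (2*t - s, -(t:ℤ)-1) := by
  rw [ringE, if_neg (by omega), if_neg (by omega), if_pos h]

lemma ringE_eq4 (t : ℕ) (s : ℤ) (h0 : 3*t+1 < s) (h : s ≤ 4*t+1) :
    ringE t s = (-(t:ℤ)-1, s - 4*t-2) := by
  rw [ringE, if_neg (by omega), if_neg (by omega), if_neg (by omega), if_pos h]

lemma ringE_eq5 (t : ℕ) (s : ℤ) (h0 : 4*t+1 < s) (h : s ≤ 5*t+1) :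
    ringE t s = (s - 5*t-2, s - 4*t-2) := by
  rw [ringE, if_neg (by omega), if_neg (by omega), if_neg (by omega), if_neg (by omega),
    if_pos h]

lemma ringE_eq6 (t : ℕ) (s : ℤ) (h0 : 5*t+1 < s) :
    ringE t s = (s - 5*t-2, (t:ℤ)) := by
  rw [ringE, if_neg (by omega), if_neg (by omega), if_neg (by omega), if_neg (by omega),
    if_neg (by omega)]

lemma ringE_step (t : ℕ) (s : ℤ) (h0 : 0 ≤ s) (h1 : s < 6*t+2) :
    ∃ s' k : ℤ, 0 ≤ s' ∧ s' < 6*t+2 ∧ s' = s - t + k*(6*t+2) ∧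
      ringE t s' = ((ringE t s).1 - (ringE t s).2 - (if (ringE t s).1 < 0 then 1 else 0),
        (ringE t s).1) := by
  rcases show (0 ≤ s ∧ s < t) ∨ s = t ∨ (t < s ∧ s ≤ 2*t) ∨ (2*t < s ∧ s ≤ 3*t)
      ∨ s = 3*t+1 ∨ (3*t+1 < s ∧ s ≤ 4*t+1) ∨ (4*t+1 < s ∧ s ≤ 5*t+1)
      ∨ (5*t+1 < s ∧ s < 6*t+2) from by omega with h|h|h|h|h|h|h|h
  · refine ⟨s + 5*t+2, 1, by omega, by omega, by ring, ?_⟩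
    rw [ringE_eq1 t s (by omega), ringE_eq6 t _ (by omega)]
    dsimp only
    rw [if_neg (by omega), Prod.mk.injEq]
    exact ⟨by omega, by omega⟩
  · refine ⟨0, 0, by omega, by omega, by omega, ?_⟩
    rw [ringE_eq1 t s (by omega), ringE_eq1 t 0 (by omega)]
    dsimp only
    rw [if_neg (by omega), Prod.mk.injEq]
    exact ⟨by omega, by omega⟩
  · refine ⟨s - t, 0, by omega, by omega, by ring, ?_⟩
    rw [ringE_eq2 t s h.1 h.2, ringE_eq1 t _ (by omega)]
    dsimp only
    rw [if_neg (by omega), Prod.mk.injEq]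
    exact ⟨by omega, by omega⟩
  · refine ⟨s - t, 0, by omega, by omega, by ring, ?_⟩
    rw [ringE_eq3 t s h.1 (by omega), ringE_eq2 t _ (by omega) (by omega)]
    dsimp only
    rw [if_pos (by omega), Prod.mk.injEq]
    exact ⟨by omega, by omega⟩
  · refine ⟨s - t, 0, by omega, by omega, by ring, ?_⟩
    rw [ringE_eq3 t s (by omega) (by omega), ringE_eq3 t _ (by omega) (by omega)]
    dsimp only
    rw [if_pos (by omega), Prod.mk.injEq]
    exact ⟨by omega, by omega⟩
  · refine ⟨s - t, 0, by omega, by omega, by ring, ?_⟩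
    rw [ringE_eq4 t s h.1 h.2, ringE_eq3 t _ (by omega) (by omega)]
    dsimp only
    rw [if_pos (by omega), Prod.mk.injEq]
    exact ⟨by omega, by omega⟩
  · refine ⟨s - t, 0, by omega, by omega, by ring, ?_⟩
    rw [ringE_eq5 t s h.1 h.2, ringE_eq4 t _ (by omega) (by omega)]
    dsimp only
    rw [if_pos (by omega), Prod.mk.injEq]
    exact ⟨by omega, by omega⟩
  · refine ⟨s - t, 0, by omega, by omega, by ring, ?_⟩
    rw [ringE_eq6 t s h.1, ringE_eq5 t _ (by omega) (by omega)]
    dsimp only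
    rw [if_neg (by omega), Prod.mk.injEq]
    exact ⟨by omega, by omega⟩


def ringP (u : ℕ) (s : ℤ) : ℤ × ℤ :=
  if s ≤ u then ((u:ℤ)-1, u-s)
  else if s ≤ 2*u then (2*u-1-s, u-s)
  else if s ≤ 3*u then (2*u-1-s, -(u:ℤ))
  else if s ≤ 4*u-1 then (-(u:ℤ)-1, s-4*u)
  else if s ≤ 5*u-1 then (s-5*u, s-4*u)
  else (s-5*u, (u:ℤ))

def ringM (u : ℕ) (s : ℤ) : ℤ × ℤ :=
  if s ≤ u-1 then ((u:ℤ), u-1-s)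
  else if s ≤ 2*u-1 then (2*u-1-s, u-1-s)
  else if s ≤ 3*u-1 then (2*u-1-s, -(u:ℤ)-1)
  else if s ≤ 4*u-1 then (-(u:ℤ), s-4*u)
  else if s ≤ 5*u-2 then (s-5*u+1, s-4*u)
  else (s-5*u+1, (u:ℤ)-1)

lemma ringP_eq1 (u : ℕ) (s : ℤ) (h : s ≤ u) : ringP u s = ((u:ℤ)-1, u-s) := if_pos h
lemma ringP_eq2 (u : ℕ) (s : ℤ) (h0 : u < s) (h : s ≤ 2*u) : ringP u s = (2*u-1-s, u-s) := by
  rw [ringP, if_neg (by omega), if_pos h]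
lemma ringP_eq3 (u : ℕ) (s : ℤ) (h0 : 2*u < s) (h : s ≤ 3*u) : ringP u s = (2*u-1-s, -(u:ℤ)) := by
  rw [ringP, if_neg (by omega), if_neg (by omega), if_pos h]
lemma ringP_eq4 (u : ℕ) (s : ℤ) (h0 : 3*u < s) (h : s ≤ 4*u-1) : ringP u s = (-(u:ℤ)-1, s-4*u) := by
  rw [ringP, if_neg (by omega), if_neg (by omega), if_neg (by omega), if_pos h]
lemma ringP_eq5 (u : ℕ) (hu : 1 ≤ u) (s : ℤ) (h0 : 4*u-1 < s) (h : s ≤ 5*u-1) : ringP u s = (s-5*u, s-4*u) := by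
  rw [ringP, if_neg (by omega), if_neg (by omega), if_neg (by omega), if_neg (by omega), if_pos h]
lemma ringP_eq6 (u : ℕ) (hu : 1 ≤ u) (s : ℤ) (h0 : 5*u-1 < s) : ringP u s = (s-5*u, (u:ℤ)) := by
  rw [ringP, if_neg (by omega), if_neg (by omega), if_neg (by omega), if_neg (by omega),
    if_neg (by omega)]

lemma ringM_eq1 (u : ℕ) (s : ℤ) (h : s ≤ u-1) : ringM u s = ((u:ℤ), u-1-s) := if_pos h
lemma ringM_eq2 (u : ℕ) (s : ℤ) (h0 : u-1 < s) (h : s ≤ 2*u-1) : ringM u s = (2*u-1-s, u-1-s) := by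
  rw [ringM, if_neg (by omega), if_pos h]
lemma ringM_eq3 (u : ℕ) (s : ℤ) (h0 : 2*u-1 < s) (h : s ≤ 3*u-1) : ringM u s = (2*u-1-s, -(u:ℤ)-1) := by
  rw [ringM, if_neg (by omega), if_neg (by omega), if_pos h]
lemma ringM_eq4 (u : ℕ) (s : ℤ) (h0 : 3*u-1 < s) (h : s ≤ 4*u-1) : ringM u s = (-(u:ℤ), s-4*u) := by
  rw [ringM, if_neg (by omega), if_neg (by omega), if_neg (by omega), if_pos h]
lemma ringM_eq5 (u : ℕ) (hu : 1 ≤ u) (s : ℤ) (h0 : 4*u-1 < s) (h : s ≤ 5*u-2) : ringM u s = (s-5*u+1, s-4*u) := by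
  rw [ringM, if_neg (by omega), if_neg (by omega), if_neg (by omega), if_neg (by omega), if_pos h]
lemma ringM_eq6 (u : ℕ) (hu : 1 ≤ u) (s : ℤ) (h0 : 5*u-2 < s) : ringM u s = (s-5*u+1, (u:ℤ)-1) := by
  rw [ringM, if_neg (by omega), if_neg (by omega), if_neg (by omega), if_neg (by omega),
    if_neg (by omega)]

lemma ringP_step (u : ℕ) (hu : 1 ≤ u) (s : ℤ) (h0 : 0 ≤ s) (h1 : s < 6*u-1) :
    ∃ s' k : ℤ, 0 ≤ s' ∧ s' < 6*u-1 ∧ s' = s - u + k*(6*u-1) ∧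
      ringM u s' = ((ringP u s).1 - (ringP u s).2 + 1 - (if (ringP u s).1 < 0 then 1 else 0),
        (ringP u s).1) := by
  rcases show (0 ≤ s ∧ s < u) ∨ s = u ∨ (u < s ∧ s ≤ 2*u-1) ∨ s = 2*u
      ∨ (2*u < s ∧ s ≤ 3*u-1) ∨ s = 3*u ∨ (3*u < s ∧ s ≤ 4*u-1) ∨ (4*u-1 < s ∧ s ≤ 5*u-1)
      ∨ (5*u-1 < s ∧ s < 6*u-1) from by omega with h|h|h|h|h|h|h|h|h
  · refine ⟨s + 5*u-1, 1, by omega, by omega, by ring, ?_⟩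
    rw [ringP_eq1 u s (by omega), ringM_eq6 u hu _ (by omega)]
    dsimp only; rw [if_neg (by omega), Prod.mk.injEq]; exact ⟨by omega, by omega⟩
  · refine ⟨0, 0, by omega, by omega, by omega, ?_⟩
    rw [ringP_eq1 u s (by omega), ringM_eq1 u 0 (by omega)]
    dsimp only; rw [if_neg (by omega), Prod.mk.injEq]; exact ⟨by omega, by omega⟩
  · refine ⟨s - u, 0, by omega, by omega, by ring, ?_⟩
    rw [ringP_eq2 u s h.1 (by omega), ringM_eq1 u _ (by omega)]
    dsimp only; rw [if_neg (by omega), Prod.mk.injEq]; exact ⟨by omega, by omega⟩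
  · refine ⟨s - u, 0, by omega, by omega, by ring, ?_⟩
    rw [ringP_eq2 u s (by omega) (by omega), ringM_eq2 u _ (by omega) (by omega)]
    dsimp only; rw [if_pos (by omega), Prod.mk.injEq]; exact ⟨by omega, by omega⟩
  · refine ⟨s - u, 0, by omega, by omega, by ring, ?_⟩
    rw [ringP_eq3 u s h.1 (by omega), ringM_eq2 u _ (by omega) (by omega)]
    dsimp only; rw [if_pos (by omega), Prod.mk.injEq]; exact ⟨by omega, by omega⟩
  · refine ⟨s - u, 0, by omega, by omega, by ring, ?_⟩
    rw [ringP_eq3 u s (by omega) (by omega), ringM_eq3 u _ (by omega) (by omega)]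
    dsimp only; rw [if_pos (by omega), Prod.mk.injEq]; exact ⟨by omega, by omega⟩
  · refine ⟨s - u, 0, by omega, by omega, by ring, ?_⟩
    rw [ringP_eq4 u s h.1 h.2, ringM_eq3 u _ (by omega) (by omega)]
    dsimp only; rw [if_pos (by omega), Prod.mk.injEq]; exact ⟨by omega, by omega⟩
  · refine ⟨s - u, 0, by omega, by omega, by ring, ?_⟩
    rw [ringP_eq5 u hu s h.1 h.2, ringM_eq4 u _ (by omega) (by omega)]
    dsimp only; rw [if_pos (by omega), Prod.mk.injEq]; exact ⟨by omega, by omega⟩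
  · refine ⟨s - u, 0, by omega, by omega, by ring, ?_⟩
    rw [ringP_eq6 u hu s h.1, ringM_eq5 u hu _ (by omega) (by omega)]
    dsimp only; rw [if_neg (by omega), Prod.mk.injEq]; exact ⟨by omega, by omega⟩

lemma ringM_step (u : ℕ) (hu : 1 ≤ u) (s : ℤ) (h0 : 0 ≤ s) (h1 : s < 6*u-1) :
    ∃ s' k : ℤ, 0 ≤ s' ∧ s' < 6*u-1 ∧ s' = s - (u-1) + k*(6*u-1) ∧
      ringP u s' = ((ringM u s).1 - (ringM u s).2 - 1 - (if (ringM u s).1 < 0 then 1 else 0),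
        (ringM u s).1) := by
  rcases show (0 ≤ s ∧ s < u-1) ∨ s = u-1 ∨ (u-1 < s ∧ s ≤ 2*u-1) ∨ (2*u-1 < s ∧ s ≤ 3*u-1)
      ∨ (3*u-1 < s ∧ s ≤ 4*u-1) ∨ (4*u-1 < s ∧ s ≤ 5*u-2) ∨ (5*u-2 < s ∧ s < 6*u-1)
      from by omega with h|h|h|h|h|h|h
  · refine ⟨s + 5*u, 1, by omega, by omega, by ring, ?_⟩
    rw [ringM_eq1 u s (by omega), ringP_eq6 u hu _ (by omega)]
    dsimp only; rw [if_neg (by omega), Prod.mk.injEq]; exact ⟨by omega, by omega⟩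
  · refine ⟨0, 0, by omega, by omega, by omega, ?_⟩
    rw [ringM_eq1 u s (by omega), ringP_eq1 u 0 (by omega)]
    dsimp only; rw [if_neg (by omega), Prod.mk.injEq]; exact ⟨by omega, by omega⟩
  · refine ⟨s - u + 1, 0, by omega, by omega, by ring, ?_⟩
    rw [ringM_eq2 u s h.1 h.2, ringP_eq1 u _ (by omega)]
    dsimp only; rw [if_neg (by omega), Prod.mk.injEq]; exact ⟨by omega, by omega⟩
  · refine ⟨s - u + 1, 0, by omega, by omega, by ring, ?_⟩
    rw [ringM_eq3 u s h.1 h.2, ringP_eq2 u _ (by omega) (by omega)]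
    dsimp only; rw [if_pos (by omega), Prod.mk.injEq]; exact ⟨by omega, by omega⟩
  · refine ⟨s - u + 1, 0, by omega, by omega, by ring, ?_⟩
    rw [ringM_eq4 u s h.1 h.2, ringP_eq3 u _ (by omega) (by omega)]
    dsimp only; rw [if_pos (by omega), Prod.mk.injEq]; exact ⟨by omega, by omega⟩
  · refine ⟨s - u + 1, 0, by omega, by omega, by ring, ?_⟩
    rw [ringM_eq5 u hu s h.1 h.2, ringP_eq4 u _ (by omega) (by omega)]
    dsimp only; rw [if_pos (by omega), Prod.mk.injEq]; exact ⟨by omega, by omega⟩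
  · refine ⟨s - u + 1, 0, by omega, by omega, by ring, ?_⟩
    rw [ringM_eq6 u hu s h.1, ringP_eq5 u hu _ (by omega) (by omega)]
    dsimp only; rw [if_neg (by omega), Prod.mk.injEq]; exact ⟨by omega, by omega⟩


lemma ringE_mem (t : ℕ) (C D : ℤ)
    (h : max (max (|2*(D-C)|) (|2*D+1|-1)) (|2*C+1|-1) = 2*t) :
    ∃ s : ℤ, 0 ≤ s ∧ s < 6*t+2 ∧ ringE t s = (C, D) := by
  have m1 : |2*(D-C)| ≤ 2*(t:ℤ) := h ▸ le_trans (le_max_left _ _) (le_max_left _ _)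
  have m2 : |2*D+1|-1 ≤ 2*(t:ℤ) := h ▸ le_trans (le_max_right _ _) (le_max_left _ _)
  have m3 : |2*C+1|-1 ≤ 2*(t:ℤ) := h ▸ le_max_right _ _
  have h1 := abs_le.mp m1
  have h2 := abs_le.mp (show |2*D+1| ≤ 2*(t:ℤ)+1 by linarith)
  have h3 := abs_le.mp (show |2*C+1| ≤ 2*(t:ℤ)+1 by linarith)
  have h4 : 2*(D-C) = 2*(t:ℤ) ∨ 2*(D-C) = -(2*(t:ℤ))
      ∨ 2*D+1 = 2*(t:ℤ)+1 ∨ 2*D+1 = -(2*(t:ℤ)+1)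
      ∨ 2*C+1 = 2*(t:ℤ)+1 ∨ 2*C+1 = -(2*(t:ℤ)+1) := by
    rcases max_choice (max (|2*(D-C)|) (|2*D+1|-1)) (|2*C+1|-1) with h'|h'
    · rcases max_choice (|2*(D-C)|) (|2*D+1|-1) with h''|h''
      · have : |2*(D-C)| = 2*(t:ℤ) := (h'.trans h'').symm.trans h
        rcases (abs_eq (by omega : (0:ℤ) ≤ 2*t)).mp this with e|e
        · exact Or.inl e
        · exact Or.inr (Or.inl e)
      · have : |2*D+1| = 2*(t:ℤ)+1 := by linarith [(h'.trans h'').symm.trans h]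
        rcases (abs_eq (by omega : (0:ℤ) ≤ 2*t+1)).mp this with e|e
        · exact Or.inr (Or.inr (Or.inl e))
        · exact Or.inr (Or.inr (Or.inr (Or.inl e)))
    · have : |2*C+1| = 2*(t:ℤ)+1 := by linarith [h'.symm.trans h]
      rcases (abs_eq (by omega : (0:ℤ) ≤ 2*t+1)).mp this with e|e
      · exact Or.inr (Or.inr (Or.inr (Or.inr (Or.inl e))))
      · exact Or.inr (Or.inr (Or.inr (Or.inr (Or.inr e))))
  by_cases c1 : C = t ∧ 0 ≤ D
  · exact ⟨t - D, by omega, by omega,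
      by rw [ringE_eq1 t _ (by omega), Prod.mk.injEq]; exact ⟨by omega, by omega⟩⟩
  by_cases c2 : C - D = t ∧ -(t:ℤ) ≤ D ∧ D ≤ -1
  · exact ⟨t - D, by omega, by omega,
      by rw [ringE_eq2 t _ (by omega) (by omega), Prod.mk.injEq]; exact ⟨by omega, by omega⟩⟩
  by_cases c3 : D = -(t:ℤ)-1 ∧ C ≤ -1
  · exact ⟨2*t - C, by omega, by omega,
      by rw [ringE_eq3 t _ (by omega) (by omega), Prod.mk.injEq]; exact ⟨by omega, by omega⟩⟩
  by_cases c4 : C = -(t:ℤ)-1 ∧ -(t:ℤ) ≤ D ∧ D ≤ -1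
  · exact ⟨4*t+2+D, by omega, by omega,
      by rw [ringE_eq4 t _ (by omega) (by omega), Prod.mk.injEq]; exact ⟨by omega, by omega⟩⟩
  by_cases c5 : D - C = t ∧ -(t:ℤ) ≤ C ∧ C ≤ -1
  · exact ⟨5*t+2+C, by omega, by omega,
      by rw [ringE_eq5 t _ (by omega) (by omega), Prod.mk.injEq]; exact ⟨by omega, by omega⟩⟩
  by_cases c6 : D = (t:ℤ) ∧ 0 ≤ C ∧ C ≤ (t:ℤ)-1
  · exact ⟨5*t+2+C, by omega, by omega,
      by rw [ringE_eq6 t _ (by omega), Prod.mk.injEq]; exact ⟨by omega, by omega⟩⟩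
  · exfalso; omega


lemma ringP_mem (u : ℕ) (hu : 1 ≤ u) (C D : ℤ)
    (h : max (max (|2*(D-C)-1|) (|2*D|-1)) (|2*C+2|-1) = 2*(u:ℤ)-1) :
    ∃ s : ℤ, 0 ≤ s ∧ s < 6*u-1 ∧ ringP u s = (C, D) := by
  have m1 : |2*(D-C)-1| ≤ 2*(u:ℤ)-1 := h ▸ le_trans (le_max_left _ _) (le_max_left _ _)
  have m2 : |2*D|-1 ≤ 2*(u:ℤ)-1 := h ▸ le_trans (le_max_right _ _) (le_max_left _ _)
  have m3 : |2*C+2|-1 ≤ 2*(u:ℤ)-1 := h ▸ le_max_right _ _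
  have h1 := abs_le.mp m1
  have h2 := abs_le.mp (show |2*D| ≤ 2*(u:ℤ) by linarith)
  have h3 := abs_le.mp (show |2*C+2| ≤ 2*(u:ℤ) by linarith)
  have h4 : 2*(D-C)-1 = 2*(u:ℤ)-1 ∨ 2*(D-C)-1 = -(2*(u:ℤ)-1)
      ∨ 2*D = 2*(u:ℤ) ∨ 2*D = -(2*(u:ℤ))
      ∨ 2*C+2 = 2*(u:ℤ) ∨ 2*C+2 = -(2*(u:ℤ)) := by
    rcases max_choice (max (|2*(D-C)-1|) (|2*D|-1)) (|2*C+2|-1) with h'|h'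
    · rcases max_choice (|2*(D-C)-1|) (|2*D|-1) with h''|h''
      · have : |2*(D-C)-1| = 2*(u:ℤ)-1 := (h'.trans h'').symm.trans h
        rcases (abs_eq (by omega : (0:ℤ) ≤ 2*u-1)).mp this with e|e
        · exact Or.inl e
        · exact Or.inr (Or.inl e)
      · have : |2*D| = 2*(u:ℤ) := by linarith [(h'.trans h'').symm.trans h]
        rcases (abs_eq (by omega : (0:ℤ) ≤ 2*u)).mp this with e|e
        · exact Or.inr (Or.inr (Or.inl e))
        · exact Or.inr (Or.inr (Or.inr (Or.inl e)))
    · have : |2*C+2| = 2*(u:ℤ) := by linarith [h'.symm.trans h]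
      rcases (abs_eq (by omega : (0:ℤ) ≤ 2*u)).mp this with e|e
      · exact Or.inr (Or.inr (Or.inr (Or.inr (Or.inl e))))
      · exact Or.inr (Or.inr (Or.inr (Or.inr (Or.inr e))))
  by_cases c1 : C = (u:ℤ)-1 ∧ 0 ≤ D
  · exact ⟨u - D, by omega, by omega,
      by rw [ringP_eq1 u _ (by omega), Prod.mk.injEq]; exact ⟨by omega, by omega⟩⟩
  by_cases c2 : C - D = (u:ℤ)-1 ∧ -(u:ℤ) ≤ D ∧ D ≤ -1
  · exact ⟨u - D, by omega, by omega,
      by rw [ringP_eq2 u _ (by omega) (by omega), Prod.mk.injEq]; exact ⟨by omega, by omega⟩⟩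
  by_cases c3 : D = -(u:ℤ) ∧ C ≤ -2
  · exact ⟨2*u-1-C, by omega, by omega,
      by rw [ringP_eq3 u _ (by omega) (by omega), Prod.mk.injEq]; exact ⟨by omega, by omega⟩⟩
  by_cases c4 : C = -(u:ℤ)-1 ∧ -(u:ℤ)+1 ≤ D ∧ D ≤ -1
  · exact ⟨4*u+D, by omega, by omega,
      by rw [ringP_eq4 u _ (by omega) (by omega), Prod.mk.injEq]; exact ⟨by omega, by omega⟩⟩
  by_cases c5 : D - C = (u:ℤ) ∧ -(u:ℤ) ≤ C ∧ C ≤ -1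
  · exact ⟨5*u+C, by omega, by omega,
      by rw [ringP_eq5 u hu _ (by omega) (by omega), Prod.mk.injEq]; exact ⟨by omega, by omega⟩⟩
  by_cases c6 : D = (u:ℤ) ∧ 0 ≤ C ∧ C ≤ (u:ℤ)-2
  · exact ⟨5*u+C, by omega, by omega,
      by rw [ringP_eq6 u hu _ (by omega), Prod.mk.injEq]; exact ⟨by omega, by omega⟩⟩
  · exfalso; omega

lemma ringM_mem (u : ℕ) (hu : 1 ≤ u) (C D : ℤ)
    (h : max (max (|2*(D-C)+1|) (|2*D+2|-1)) (|2*C|-1) = 2*(u:ℤ)-1) :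
    ∃ s : ℤ, 0 ≤ s ∧ s < 6*u-1 ∧ ringM u s = (C, D) := by
  have m1 : |2*(D-C)+1| ≤ 2*(u:ℤ)-1 := h ▸ le_trans (le_max_left _ _) (le_max_left _ _)
  have m2 : |2*D+2|-1 ≤ 2*(u:ℤ)-1 := h ▸ le_trans (le_max_right _ _) (le_max_left _ _)
  have m3 : |2*C|-1 ≤ 2*(u:ℤ)-1 := h ▸ le_max_right _ _
  have h1 := abs_le.mp m1
  have h2 := abs_le.mp (show |2*D+2| ≤ 2*(u:ℤ) by linarith)
  have h3 := abs_le.mp (show |2*C| ≤ 2*(u:ℤ) by linarith)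
  have h4 : 2*(D-C)+1 = 2*(u:ℤ)-1 ∨ 2*(D-C)+1 = -(2*(u:ℤ)-1)
      ∨ 2*D+2 = 2*(u:ℤ) ∨ 2*D+2 = -(2*(u:ℤ))
      ∨ 2*C = 2*(u:ℤ) ∨ 2*C = -(2*(u:ℤ)) := by
    rcases max_choice (max (|2*(D-C)+1|) (|2*D+2|-1)) (|2*C|-1) with h'|h'
    · rcases max_choice (|2*(D-C)+1|) (|2*D+2|-1) with h''|h''
      · have : |2*(D-C)+1| = 2*(u:ℤ)-1 := (h'.trans h'').symm.trans h
        rcases (abs_eq (by omega : (0:ℤ) ≤ 2*u-1)).mp this with e|e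
        · exact Or.inl e
        · exact Or.inr (Or.inl e)
      · have : |2*D+2| = 2*(u:ℤ) := by linarith [(h'.trans h'').symm.trans h]
        rcases (abs_eq (by omega : (0:ℤ) ≤ 2*u)).mp this with e|e
        · exact Or.inr (Or.inr (Or.inl e))
        · exact Or.inr (Or.inr (Or.inr (Or.inl e)))
    · have : |2*C| = 2*(u:ℤ) := by linarith [h'.symm.trans h]
      rcases (abs_eq (by omega : (0:ℤ) ≤ 2*u)).mp this with e|e
      · exact Or.inr (Or.inr (Or.inr (Or.inr (Or.inl e))))
      · exact Or.inr (Or.inr (Or.inr (Or.inr (Or.inr e))))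
  by_cases c1 : C = (u:ℤ) ∧ 0 ≤ D
  · exact ⟨u-1-D, by omega, by omega,
      by rw [ringM_eq1 u _ (by omega), Prod.mk.injEq]; exact ⟨by omega, by omega⟩⟩
  by_cases c2 : C - D = (u:ℤ) ∧ -(u:ℤ) ≤ D ∧ D ≤ -1
  · exact ⟨u-1-D, by omega, by omega,
      by rw [ringM_eq2 u _ (by omega) (by omega), Prod.mk.injEq]; exact ⟨by omega, by omega⟩⟩
  by_cases c3 : D = -(u:ℤ)-1 ∧ -(u:ℤ) ≤ C ∧ C ≤ -1
  · exact ⟨2*u-1-C, by omega, by omega,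
      by rw [ringM_eq3 u _ (by omega) (by omega), Prod.mk.injEq]; exact ⟨by omega, by omega⟩⟩
  by_cases c4 : C = -(u:ℤ) ∧ -(u:ℤ) ≤ D ∧ D ≤ -1
  · exact ⟨4*u+D, by omega, by omega,
      by rw [ringM_eq4 u _ (by omega) (by omega), Prod.mk.injEq]; exact ⟨by omega, by omega⟩⟩
  by_cases c5 : D - C = (u:ℤ)-1 ∧ -(u:ℤ)+1 ≤ C ∧ C ≤ -1
  · exact ⟨5*u-1+C, by omega, by omega,
      by rw [ringM_eq5 u hu _ (by omega) (by omega), Prod.mk.injEq]; exact ⟨by omega, by omega⟩⟩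
  by_cases c6 : D = (u:ℤ)-1 ∧ 0 ≤ C ∧ C ≤ (u:ℤ)-1
  · exact ⟨5*u-1+C, by omega, by omega,
      by rw [ringM_eq6 u hu _ (by omega), Prod.mk.injEq]; exact ⟨by omega, by omega⟩⟩
  · exfalso; omega


/-- The conjugated map in `(a, d)` coordinates. -/
noncomputable def gmap (p : ℝ × ℝ) : ℝ × ℝ :=
  (p.2 - (if 0 ≤ p.2 - p.1 then 1 else -1)/2, p.2 - p.1)

lemma gmap_injective : Function.Injective gmap := by
  intro p q h
  have h2 : p.2 - p.1 = q.2 - q.1 := congrArg Prod.snd h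
  have h1 : p.2 - (if 0 ≤ p.2 - p.1 then (1:ℝ) else -1)/2
      = q.2 - (if 0 ≤ q.2 - q.1 then (1:ℝ) else -1)/2 := congrArg Prod.fst h
  rw [h2] at h1
  have hp2 : p.2 = q.2 := by linarith
  have hp1 : p.1 = q.1 := by linarith
  exact Prod.ext hp1 hp2

/-- The even-case state invariant. -/
def EvenSt (t : ℕ) (si : ℤ) (β δ : ℝ) (p : ℝ × ℝ) : Prop :=
  p.2 - p.1 = ((ringE t si).1 : ℝ) + β ∧ p.2 = ((ringE t si).2 : ℝ) + δ ∧
  0 < β ∧ β < 1 ∧ 0 < δ ∧ δ < 1 ∧ -(1/2 : ℝ) < β - δ ∧ β - δ < 1/2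

lemma evenSt_step (t : ℕ) (si : ℤ) (h0 : 0 ≤ si) (h1 : si < 6*t+2) (β δ : ℝ) (p : ℝ × ℝ)
    (h : EvenSt t si β δ p) :
    ∃ si' k : ℤ, 0 ≤ si' ∧ si' < 6*t+2 ∧ si' = si - t + k*(6*t+2) ∧
      EvenSt t si' (β - δ + 1/2) β (gmap p) := by
  obtain ⟨s', k, b0, b1, heq, hring⟩ := ringE_step t si h0 h1
  obtain ⟨e1, e2, hβ0, hβ1, hδ0, hδ1, hr0, hr1⟩ := h
  have hC1 : ((ringE t s').1 : ℤ) = (ringE t si).1 - (ringE t si).2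
      - (if (ringE t si).1 < 0 then 1 else 0) := by rw [hring]
  have hC2 : ((ringE t s').2 : ℤ) = (ringE t si).1 := by rw [hring]
  refine ⟨s', k, b0, b1, heq, ?_, ?_, by linarith, by linarith, hβ0, hβ1, by linarith, by linarith⟩
  · show p.2 - p.1 - (p.2 - (if 0 ≤ p.2 - p.1 then (1:ℝ) else -1)/2)
        = ((ringE t s').1 : ℝ) + (β - δ + 1/2)
    rw [hC1]
    by_cases hC : (ringE t si).1 < 0
    · have hCle : (ringE t si).1 ≤ -1 := by omega
      have hCle' : ((ringE t si).1 : ℝ) ≤ -1 := by exact_mod_cast hCle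
      have hneg : ¬ (0 ≤ p.2 - p.1) := by push_neg; nlinarith [hCle']
      rw [if_neg hneg, if_pos hC]
      push_cast
      linarith [e1, e2]
    · have hCge : (0:ℤ) ≤ (ringE t si).1 := by omega
      have hC' : (0:ℝ) ≤ ((ringE t si).1 : ℝ) := by exact_mod_cast hCge
      have hpos : (0 ≤ p.2 - p.1) := by nlinarith [hC']
      rw [if_pos hpos, if_neg hC]
      push_cast
      linarith [e1, e2]
  · show p.2 - p.1 = ((ringE t s').2 : ℝ) + β
    rw [hC2]
    exact e1
lemma evenSt_six (t : ℕ) (si : ℤ) (h0 : 0 ≤ si) (h1 : si < 6*t+2) (β δ : ℝ) (p : ℝ × ℝ)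
    (h : EvenSt t si β δ p) :
    ∃ si' k : ℤ, 0 ≤ si' ∧ si' < 6*t+2 ∧ si' = si - 6*t + k*(6*t+2) ∧
      EvenSt t si' β δ (gmap (gmap (gmap (gmap (gmap (gmap p)))))) := by
  obtain ⟨s1, k1, a0, a1, e1, g1⟩ := evenSt_step t si h0 h1 β δ p h
  obtain ⟨s2, k2, b0, b1, e2, g2⟩ := evenSt_step t s1 a0 a1 _ _ _ g1
  obtain ⟨s3, k3, c0, c1, e3, g3⟩ := evenSt_step t s2 b0 b1 _ _ _ g2
  obtain ⟨s4, k4, d0, d1, e4, g4⟩ := evenSt_step t s3 c0 c1 _ _ _ g3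
  obtain ⟨s5, k5, f0, f1, e5, g5⟩ := evenSt_step t s4 d0 d1 _ _ _ g4
  obtain ⟨s6, k6, g0', g1', e6, g6⟩ := evenSt_step t s5 f0 f1 _ _ _ g5
  refine ⟨s6, k1+k2+k3+k4+k5+k6, g0', g1', by subst e6 e5 e4 e3 e2 e1; ring, ?_⟩
  convert g6 using 2 <;> ring

lemma evenSt_iter (t : ℕ) (si : ℤ) (h0 : 0 ≤ si) (h1 : si < 6*t+2) (β δ : ℝ) (p : ℝ × ℝ)
    (h : EvenSt t si β δ p) (n : ℕ) :
    ∃ si' k : ℤ, 0 ≤ si' ∧ si' < 6*t+2 ∧ si' = si - 6*t*n + k*(6*t+2) ∧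
      EvenSt t si' β δ (gmap^[6*n] p) := by
  induction n with
  | zero => exact ⟨si, 0, h0, h1, by push_cast; ring, by simpa using h⟩
  | succ n ih =>
    obtain ⟨si', k, b0, b1, heq, h'⟩ := ih
    obtain ⟨si'', k', c0, c1, heq', h''⟩ := evenSt_six t si' b0 b1 β δ _ h'
    refine ⟨si'', k' + k, c0, c1, by subst heq' heq; push_cast; ring, ?_⟩
    have hexp : (6*(n+1)) = (6*n)+1+1+1+1+1+1 := by ring
    rw [hexp, Function.iterate_succ_apply', Function.iterate_succ_apply',
      Function.iterate_succ_apply', Function.iterate_succ_apply', Function.iterate_succ_apply',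
      Function.iterate_succ_apply']
    exact h''

lemma evenSt_period (t : ℕ) (si : ℤ) (h0 : 0 ≤ si) (h1 : si < 6*t+2) (β δ : ℝ) (p : ℝ × ℝ)
    (h : EvenSt t si β δ p) : gmap^[18*t+6] p = p := by
  obtain ⟨si', k, b0, b1, heq, h'⟩ := evenSt_iter t si h0 h1 β δ p h (3*t+1)
  have hsix : si' - si = (k - 3*t)*(6*t+2) := by push_cast at heq ⊢; linear_combination heq
  have hz : si' = si := by
    rcases lt_trichotomy (k - 3*(t:ℤ)) 0 with hlt|heq0|hgt
    · have h5 : k - 3*(t:ℤ) ≤ -1 := by omega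
      have h6 := mul_le_mul_of_nonneg_right h5 (show (0:ℤ) ≤ 6*t+2 by omega)
      rw [neg_one_mul] at h6
      linarith
    · rw [heq0, zero_mul] at hsix; omega
    · have h5 : 1 ≤ k - 3*(t:ℤ) := by omega
      have h6 := mul_le_mul_of_nonneg_right h5 (show (0:ℤ) ≤ 6*t+2 by omega)
      rw [one_mul] at h6
      linarith
  rw [hz] at h'
  have hexp : 18*t+6 = 6*(3*t+1) := by ring
  rw [hexp]
  obtain ⟨u1, u2, _⟩ := h
  obtain ⟨v1, v2, _⟩ := h'
  have hsnd : (gmap^[6*(3*t+1)] p).2 = p.2 := by rw [v2, u2]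
  have hfst : (gmap^[6*(3*t+1)] p).1 = p.1 := by
    have := v1; have := u1; linarith
  exact Prod.ext hfst hsnd
/-- Odd-case state, phase `+1`. -/
def OddP (u : ℕ) (si : ℤ) (β δ : ℝ) (p : ℝ × ℝ) : Prop :=
  p.2 - p.1 = ((ringP u si).1 : ℝ) + β ∧ p.2 = ((ringP u si).2 : ℝ) + δ ∧
  0 < β ∧ β < 1 ∧ 0 < δ ∧ δ < 1 ∧ (1/2 : ℝ) < β - δ

/-- Odd-case state, phase `-1`. -/
def OddM (u : ℕ) (si : ℤ) (β δ : ℝ) (p : ℝ × ℝ) : Prop :=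
  p.2 - p.1 = ((ringM u si).1 : ℝ) + β ∧ p.2 = ((ringM u si).2 : ℝ) + δ ∧
  0 < β ∧ β < 1 ∧ 0 < δ ∧ δ < 1 ∧ β - δ < -(1/2 : ℝ)

lemma oddP_step (u : ℕ) (hu : 1 ≤ u) (si : ℤ) (h0 : 0 ≤ si) (h1 : si < 6*u-1)
    (β δ : ℝ) (p : ℝ × ℝ) (h : OddP u si β δ p) :
    ∃ si' k : ℤ, 0 ≤ si' ∧ si' < 6*u-1 ∧ si' = si - u + k*(6*u-1) ∧
      OddM u si' (β - δ - 1/2) β (gmap p) := by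
  obtain ⟨s', k, b0, b1, heq, hring⟩ := ringP_step u hu si h0 h1
  obtain ⟨e1, e2, hβ0, hβ1, hδ0, hδ1, hr0⟩ := h
  have hC1 : ((ringM u s').1 : ℤ) = (ringP u si).1 - (ringP u si).2 + 1
      - (if (ringP u si).1 < 0 then 1 else 0) := by rw [hring]
  have hC2 : ((ringM u s').2 : ℤ) = (ringP u si).1 := by rw [hring]
  refine ⟨s', k, b0, b1, heq, ?_, ?_, by linarith, by linarith, hβ0, hβ1, by linarith⟩
  · show p.2 - p.1 - (p.2 - (if 0 ≤ p.2 - p.1 then (1:ℝ) else -1)/2)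
        = ((ringM u s').1 : ℝ) + (β - δ - 1/2)
    rw [hC1]
    by_cases hC : (ringP u si).1 < 0
    · have hCle : (ringP u si).1 ≤ -1 := by omega
      have hCle' : ((ringP u si).1 : ℝ) ≤ -1 := by exact_mod_cast hCle
      have hneg : ¬ (0 ≤ p.2 - p.1) := by push_neg; nlinarith [hCle']
      rw [if_neg hneg, if_pos hC]
      push_cast
      linarith [e1, e2]
    · have hCge : (0:ℤ) ≤ (ringP u si).1 := by omega
      have hC' : (0:ℝ) ≤ ((ringP u si).1 : ℝ) := by exact_mod_cast hCge
      have hpos : (0 ≤ p.2 - p.1) := by nlinarith [hC']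
      rw [if_pos hpos, if_neg hC]
      push_cast
      linarith [e1, e2]
  · show p.2 - p.1 = ((ringM u s').2 : ℝ) + β
    rw [hC2]
    exact e1

lemma oddM_step (u : ℕ) (hu : 1 ≤ u) (si : ℤ) (h0 : 0 ≤ si) (h1 : si < 6*u-1)
    (β δ : ℝ) (p : ℝ × ℝ) (h : OddM u si β δ p) :
    ∃ si' k : ℤ, 0 ≤ si' ∧ si' < 6*u-1 ∧ si' = si - (u-1) + k*(6*u-1) ∧
      OddP u si' (β - δ + 3/2) β (gmap p) := by
  obtain ⟨s', k, b0, b1, heq, hring⟩ := ringM_step u hu si h0 h1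
  obtain ⟨e1, e2, hβ0, hβ1, hδ0, hδ1, hr0⟩ := h
  have hC1 : ((ringP u s').1 : ℤ) = (ringM u si).1 - (ringM u si).2 - 1
      - (if (ringM u si).1 < 0 then 1 else 0) := by rw [hring]
  have hC2 : ((ringP u s').2 : ℤ) = (ringM u si).1 := by rw [hring]
  refine ⟨s', k, b0, b1, heq, ?_, ?_, by linarith, by linarith, hβ0, hβ1, by linarith⟩
  · show p.2 - p.1 - (p.2 - (if 0 ≤ p.2 - p.1 then (1:ℝ) else -1)/2)
        = ((ringP u s').1 : ℝ) + (β - δ + 3/2)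
    rw [hC1]
    by_cases hC : (ringM u si).1 < 0
    · have hCle : (ringM u si).1 ≤ -1 := by omega
      have hCle' : ((ringM u si).1 : ℝ) ≤ -1 := by exact_mod_cast hCle
      have hneg : ¬ (0 ≤ p.2 - p.1) := by push_neg; nlinarith [hCle']
      rw [if_neg hneg, if_pos hC]
      push_cast
      linarith [e1, e2]
    · have hCge : (0:ℤ) ≤ (ringM u si).1 := by omega
      have hC' : (0:ℝ) ≤ ((ringM u si).1 : ℝ) := by exact_mod_cast hCge
      have hpos : (0 ≤ p.2 - p.1) := by nlinarith [hC']
      rw [if_pos hpos, if_neg hC]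
      push_cast
      linarith [e1, e2]
  · show p.2 - p.1 = ((ringP u s').2 : ℝ) + β
    rw [hC2]
    exact e1

lemma oddP_six (u : ℕ) (hu : 1 ≤ u) (si : ℤ) (h0 : 0 ≤ si) (h1 : si < 6*u-1)
    (β δ : ℝ) (p : ℝ × ℝ) (h : OddP u si β δ p) :
    ∃ si' k : ℤ, 0 ≤ si' ∧ si' < 6*u-1 ∧ si' = si - (6*u-3) + k*(6*u-1) ∧
      OddP u si' β δ (gmap (gmap (gmap (gmap (gmap (gmap p)))))) := by
  obtain ⟨s1, k1, a0, a1, e1, g1⟩ := oddP_step u hu si h0 h1 β δ p h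
  obtain ⟨s2, k2, b0, b1, e2, g2⟩ := oddM_step u hu s1 a0 a1 _ _ _ g1
  obtain ⟨s3, k3, c0, c1, e3, g3⟩ := oddP_step u hu s2 b0 b1 _ _ _ g2
  obtain ⟨s4, k4, d0, d1, e4, g4⟩ := oddM_step u hu s3 c0 c1 _ _ _ g3
  obtain ⟨s5, k5, f0, f1, e5, g5⟩ := oddP_step u hu s4 d0 d1 _ _ _ g4
  obtain ⟨s6, k6, g0', g1', e6, g6⟩ := oddM_step u hu s5 f0 f1 _ _ _ g5
  refine ⟨s6, k1+k2+k3+k4+k5+k6, g0', g1', by subst e6 e5 e4 e3 e2 e1; ring, ?_⟩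
  convert g6 using 2 <;> ring

lemma oddP_iter (u : ℕ) (hu : 1 ≤ u) (si : ℤ) (h0 : 0 ≤ si) (h1 : si < 6*u-1)
    (β δ : ℝ) (p : ℝ × ℝ) (h : OddP u si β δ p) (n : ℕ) :
    ∃ si' k : ℤ, 0 ≤ si' ∧ si' < 6*u-1 ∧ si' = si - (6*u-3)*n + k*(6*u-1) ∧
      OddP u si' β δ (gmap^[6*n] p) := by
  induction n with
  | zero => exact ⟨si, 0, h0, h1, by push_cast; ring, by simpa using h⟩
  | succ n ih =>
    obtain ⟨si', k, b0, b1, heq, h'⟩ := ih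
    obtain ⟨si'', k', c0, c1, heq', h''⟩ := oddP_six u hu si' b0 b1 β δ _ h'
    refine ⟨si'', k' + k, c0, c1, by subst heq' heq; push_cast; ring, ?_⟩
    have hexp : (6*(n+1)) = (6*n)+1+1+1+1+1+1 := by ring
    rw [hexp, Function.iterate_succ_apply', Function.iterate_succ_apply',
      Function.iterate_succ_apply', Function.iterate_succ_apply', Function.iterate_succ_apply',
      Function.iterate_succ_apply']
    exact h''

lemma oddP_period (u : ℕ) (hu : 1 ≤ u) (si : ℤ) (h0 : 0 ≤ si) (h1 : si < 6*u-1)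
    (β δ : ℝ) (p : ℝ × ℝ) (h : OddP u si β δ p) : gmap^[36*u-6] p = p := by
  obtain ⟨si', k, b0, b1, heq, h'⟩ := oddP_iter u hu si h0 h1 β δ p h (6*u-1)
  have hc : ((6*u-1 : ℕ) : ℤ) = 6*(u:ℤ)-1 := by omega
  have hsix : si' - si = (k - (6*u-3))*(6*(u:ℤ)-1) := by
    rw [hc] at heq; linear_combination heq
  have hz : si' = si := by
    rcases lt_trichotomy (k - (6*(u:ℤ)-3)) 0 with hlt|heq0|hgt
    · have h5 : k - (6*(u:ℤ)-3) ≤ -1 := by omega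
      have h6 := mul_le_mul_of_nonneg_right h5 (show (0:ℤ) ≤ 6*(u:ℤ)-1 by omega)
      rw [neg_one_mul] at h6
      linarith
    · rw [heq0, zero_mul] at hsix; omega
    · have h5 : 1 ≤ k - (6*(u:ℤ)-3) := by omega
      have h6 := mul_le_mul_of_nonneg_right h5 (show (0:ℤ) ≤ 6*(u:ℤ)-1 by omega)
      rw [one_mul] at h6
      linarith
  rw [hz] at h'
  have hexp : 36*u-6 = 6*(6*u-1) := by omega
  rw [hexp]
  obtain ⟨u1, u2, _⟩ := h
  obtain ⟨v1, v2, _⟩ := h'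
  have hsnd : (gmap^[6*(6*u-1)] p).2 = p.2 := by rw [v2, u2]
  have hfst : (gmap^[6*(6*u-1)] p).1 = p.1 := by linarith
  exact Prod.ext hfst hsnd

lemma oddM_period (u : ℕ) (hu : 1 ≤ u) (si : ℤ) (h0 : 0 ≤ si) (h1 : si < 6*u-1)
    (β δ : ℝ) (p : ℝ × ℝ) (h : OddM u si β δ p) : gmap^[36*u-6] p = p := by
  obtain ⟨si', k, b0, b1, heq, h'⟩ := oddM_step u hu si h0 h1 β δ p h
  have key : gmap^[36*u-6] (gmap p) = gmap p := oddP_period u hu si' b0 b1 _ _ _ h'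
  have h2 : gmap (gmap^[36*u-6] p) = gmap p := by
    rw [← Function.iterate_succ_apply' gmap (36*u-6) p, Function.iterate_succ_apply gmap (36*u-6) p]
    exact key
  exact gmap_injective h2
lemma F_conj (q : ℝ × ℝ) :
    F (q.1 + q.2, (q.2 - q.1) * Real.sqrt 3) =
      ((gmap q).1 + (gmap q).2, ((gmap q).2 - (gmap q).1) * Real.sqrt 3) := by
  have h3 : Real.sqrt 3 * Real.sqrt 3 = 3 := Real.mul_self_sqrt (by norm_num)
  have hpos : (0:ℝ) < Real.sqrt 3 := Real.sqrt_pos.mpr (by norm_num)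
  have hsgn : (0 ≤ (q.2 - q.1) * Real.sqrt 3) ↔ (0 ≤ q.2 - q.1) :=
    mul_nonneg_iff_of_pos_right hpos
  simp only [F, _root_.s, gmap]
  by_cases hq : 0 ≤ q.2 - q.1
  · rw [if_pos (hsgn.mpr hq), if_pos hq]
    refine Prod.ext ?_ ?_
    · show (q.1 + q.2 - 1)/2 + Real.sqrt 3/2 * ((q.2 - q.1) * Real.sqrt 3)
        = q.2 - 1/2 + (q.2 - q.1)
      linear_combination ((q.2 - q.1)/2) * h3
    · show -(Real.sqrt 3/2) * (q.1 + q.2 - 1) + ((q.2 - q.1) * Real.sqrt 3)/2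
        = (q.2 - q.1 - (q.2 - 1/2)) * Real.sqrt 3
      ring
  · rw [if_neg (fun hh => hq (hsgn.mp hh)), if_neg hq]
    refine Prod.ext ?_ ?_
    · show (q.1 + q.2 - (-1))/2 + Real.sqrt 3/2 * ((q.2 - q.1) * Real.sqrt 3)
        = q.2 - (-1)/2 + (q.2 - q.1)
      linear_combination ((q.2 - q.1)/2) * h3
    · show -(Real.sqrt 3/2) * (q.1 + q.2 - (-1)) + ((q.2 - q.1) * Real.sqrt 3)/2
        = (q.2 - q.1 - (q.2 - (-1)/2)) * Real.sqrt 3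
      ring

lemma F_iter_conj (n : ℕ) (q : ℝ × ℝ) :
    F^[n] (q.1 + q.2, (q.2 - q.1) * Real.sqrt 3) =
      ((gmap^[n] q).1 + (gmap^[n] q).2, ((gmap^[n] q).2 - (gmap^[n] q).1) * Real.sqrt 3) := by
  induction n with
  | zero => simp
  | succ n ih =>
    rw [Function.iterate_succ_apply', Function.iterate_succ_apply', ih, F_conj]

lemma floor_int_add_eq (n : ℤ) (r : ℝ) (h0 : 0 ≤ r) (h1 : r < 1) : ⌊(n:ℝ) + r⌋ = n := by
  have h2 : ((n:ℝ) + r) = r + n := by ring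
  rw [h2, Int.floor_add_intCast, Int.floor_eq_zero_iff.mpr ⟨h0, h1⟩, zero_add]

end PFaux

open PFaux in
/-- On the zero-free set, with `c = V(x,y)`: if `c` is even then
`F^{9c+6}(x,y) = (x,y)`, and if `c` is odd then `F^{18c+12}(x,y) = (x,y)`.
In particular every zero-free point is periodic. -/
theorem periods_zero_free_pi_div_three (x y : ℝ)
    (h : ¬((∃ k : ℤ, y = Real.sqrt 3 * (x - 2 * k - 1)) ∨
           (∃ ℓ : ℤ, y = Real.sqrt 3 * ℓ) ∨
           (∃ m : ℤ, y = -Real.sqrt 3 * (x - 2 * m)))) :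
    let c : ℕ := (V (x, y)).toNat
    (Even (V (x, y)) → F^[9 * c + 6] (x, y) = (x, y)) ∧
    (Odd (V (x, y)) → F^[18 * c + 12] (x, y) = (x, y)) ∧
    (∃ p : ℕ, 1 ≤ p ∧ F^[p] (x, y) = (x, y)) := by
  intro c
  push_neg at h
  obtain ⟨hk, hl, hm⟩ := h
  have h3 : Real.sqrt 3 * Real.sqrt 3 = 3 := Real.mul_self_sqrt (by norm_num)
  obtain ⟨Ci, hCidef⟩ : ∃ n : ℤ, n = ⌊Real.sqrt 3 * y / 3⌋ := ⟨_, rfl⟩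
  obtain ⟨Di, hDidef⟩ : ∃ n : ℤ, n = ⌊(3 * x + Real.sqrt 3 * y) / 6⌋ := ⟨_, rfl⟩
  obtain ⟨βr, hβr⟩ : ∃ b : ℝ, b = Real.sqrt 3 * y / 3 - (Ci:ℝ) := ⟨_, rfl⟩
  obtain ⟨δr, hδr⟩ : ∃ b : ℝ, b = (3 * x + Real.sqrt 3 * y) / 6 - (Di:ℝ) := ⟨_, rfl⟩
  have hCx : C (x, y) = Ci := by rw [hCidef]; rfl
  have hDx : D (x, y) = Di := by rw [hDidef]; rfl
  have hfl1 : ((Ci:ℝ)) ≤ Real.sqrt 3 * y / 3 := by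
    rw [hCidef]; exact Int.floor_le _
  have hfl2 : Real.sqrt 3 * y / 3 < (Ci:ℝ) + 1 := by
    rw [hCidef]; exact Int.lt_floor_add_one _
  have hfl3 : ((Di:ℝ)) ≤ (3 * x + Real.sqrt 3 * y) / 6 := by
    rw [hDidef]; exact Int.floor_le _
  have hfl4 : (3 * x + Real.sqrt 3 * y) / 6 < (Di:ℝ) + 1 := by
    rw [hDidef]; exact Int.lt_floor_add_one _
  have hβ0 : 0 < βr := by
    rcases lt_or_eq_of_le (sub_nonneg.mpr hfl1) with h'|h'
    · rw [hβr]; exact h'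
    · exfalso
      exact hl Ci (by linear_combination Real.sqrt 3 * h'.symm - (y/3) * h3)
  have hβ1 : βr < 1 := by rw [hβr]; linarith
  have hδ0 : 0 < δr := by
    rcases lt_or_eq_of_le (sub_nonneg.mpr hfl3) with h'|h'
    · rw [hδr]; exact h'
    · exfalso
      refine hm Di ?_
      linear_combination 2 * Real.sqrt 3 * h'.symm - (y/3) * h3
  have hδ1 : δr < 1 := by rw [hδr]; linarith
  have hne1 : βr - δr ≠ 1/2 := by
    intro h0
    refine hk (Di - Ci - 1) ?_
    rw [hβr, hδr] at h0
    push_cast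
    linear_combination 2 * Real.sqrt 3 * h0 - (y/3) * h3
  have hne2 : βr - δr ≠ -(1/2) := by
    intro h0
    refine hk (Di - Ci) ?_
    rw [hβr, hδr] at h0
    push_cast
    linear_combination 2 * Real.sqrt 3 * h0 - (y/3) * h3
  have hV0 : 0 ≤ V (x, y) :=
    le_trans (abs_nonneg _) (le_trans (le_max_left _ _) (le_max_left _ _))
  have hcV : (c:ℤ) = V (x, y) := Int.toNat_of_nonneg hV0
  -- the conjugated base point
  have hxyp : (x, y) = ((x/2 - Real.sqrt 3*y/6) + (x/2 + Real.sqrt 3*y/6),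
      ((x/2 + Real.sqrt 3*y/6) - (x/2 - Real.sqrt 3*y/6)) * Real.sqrt 3) := by
    refine Prod.ext (by push_cast; ring) ?_
    show y = ((x/2 + Real.sqrt 3*y/6) - (x/2 - Real.sqrt 3*y/6)) * Real.sqrt 3
    linear_combination (-y/3) * h3
  have P1 : Even (V (x, y)) → F^[9 * c + 6] (x, y) = (x, y) := by
    intro hE
    -- rule out the odd regions
    have hreg : -(1/2) < βr - δr ∧ βr - δr < 1/2 := by
      rcases lt_trichotomy (βr - δr) (-(1/2)) with h'|h'|h'
      · exfalso
        have harg : (3*x - Real.sqrt 3*y + 3)/6 = ((Di - Ci + 1 : ℤ):ℝ) + (δr - βr - 1/2) := by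
          rw [hβr, hδr]; push_cast; ring
        have hBB : B (x, y) = Di - Ci + 1 := by
          show ⌊(3 * x - Real.sqrt 3 * y + 3) / 6⌋ = Di - Ci + 1
          rw [harg, floor_int_add_eq (Di - Ci + 1) (δr - βr - 1/2) (by linarith) (by linarith)]
        have hVodd : V (x, y) = max (max (|2*(Di-Ci)+1|) (|2*Di+2|-1)) (|2*Ci|-1) := by
          show max (max (|B (x,y) - C (x,y) + D (x,y)|) (|B (x,y) + C (x,y) + D (x,y) + 1| - 1))
            (|-B (x,y) + C (x,y) + D (x,y) + 1| - 1) = _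
          rw [hBB, hCx, hDx,
            show Di - Ci + 1 - Ci + Di = 2*(Di-Ci)+1 from by ring,
            show Di - Ci + 1 + Ci + Di + 1 = 2*Di+2 from by ring,
            show -(Di - Ci + 1) + Ci + Di + 1 = 2*Ci from by ring]
        have hodd : Odd (V (x, y)) := by
          rw [hVodd]
          rcases max_choice (max (|2*(Di-Ci)+1|) (|2*Di+2|-1)) (|2*Ci|-1) with h1|h1 <;> rw [h1]
          · rcases max_choice (|2*(Di-Ci)+1|) (|2*Di+2|-1) with h2|h2 <;> rw [h2]
            · rcases abs_choice (2*(Di-Ci)+1) with e|e <;> rw [e]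
              exacts [⟨Di-Ci, by ring⟩, ⟨-(Di-Ci)-1, by ring⟩]
            · rcases abs_choice (2*Di+2) with e|e <;> rw [e]
              exacts [⟨Di, by ring⟩, ⟨-Di-2, by ring⟩]
          · rcases abs_choice (2*Ci) with e|e <;> rw [e]
            exacts [⟨Ci-1, by ring⟩, ⟨-Ci-1, by ring⟩]
        exact (Int.not_odd_iff_even.mpr hE) hodd
      · exact absurd h' hne2
      · rcases lt_trichotomy (βr - δr) (1/2) with h''|h''|h''
        · exact ⟨h', h''⟩
        · exact absurd h'' hne1
        · exfalso
          have harg : (3*x - Real.sqrt 3*y + 3)/6 = ((Di - Ci - 1 : ℤ):ℝ) + (δr - βr + 3/2) := by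
            rw [hβr, hδr]; push_cast; ring
          have hBB : B (x, y) = Di - Ci - 1 := by
            show ⌊(3 * x - Real.sqrt 3 * y + 3) / 6⌋ = Di - Ci - 1
            rw [harg, floor_int_add_eq (Di - Ci - 1) (δr - βr + 3/2) (by linarith) (by linarith)]
          have hVodd : V (x, y) = max (max (|2*(Di-Ci)-1|) (|2*Di|-1)) (|2*Ci+2|-1) := by
            show max (max (|B (x,y) - C (x,y) + D (x,y)|) (|B (x,y) + C (x,y) + D (x,y) + 1| - 1))
              (|-B (x,y) + C (x,y) + D (x,y) + 1| - 1) = _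
            rw [hBB, hCx, hDx,
              show Di - Ci - 1 - Ci + Di = 2*(Di-Ci)-1 from by ring,
              show Di - Ci - 1 + Ci + Di + 1 = 2*Di from by ring,
              show -(Di - Ci - 1) + Ci + Di + 1 = 2*Ci+2 from by ring]
          have hodd : Odd (V (x, y)) := by
            rw [hVodd]
            rcases max_choice (max (|2*(Di-Ci)-1|) (|2*Di|-1)) (|2*Ci+2|-1) with h1|h1 <;> rw [h1]
            · rcases max_choice (|2*(Di-Ci)-1|) (|2*Di|-1) with h2|h2 <;> rw [h2]
              · rcases abs_choice (2*(Di-Ci)-1) with e|e <;> rw [e]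
                exacts [⟨Di-Ci-1, by ring⟩, ⟨-(Di-Ci), by ring⟩]
              · rcases abs_choice (2*Di) with e|e <;> rw [e]
                exacts [⟨Di-1, by ring⟩, ⟨-Di-1, by ring⟩]
            · rcases abs_choice (2*Ci+2) with e|e <;> rw [e]
              exacts [⟨Ci, by ring⟩, ⟨-Ci-2, by ring⟩]
          exact (Int.not_odd_iff_even.mpr hE) hodd
    -- now the R0 region
    have harg : (3*x - Real.sqrt 3*y + 3)/6 = ((Di - Ci : ℤ):ℝ) + (δr - βr + 1/2) := by
      rw [hβr, hδr]; push_cast; ring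
    have hBB : B (x, y) = Di - Ci := by
      show ⌊(3 * x - Real.sqrt 3 * y + 3) / 6⌋ = Di - Ci
      rw [harg, floor_int_add_eq (Di - Ci) (δr - βr + 1/2) (by linarith [hreg.2]) (by linarith [hreg.1])]
    have hVeven : V (x, y) = max (max (|2*(Di-Ci)|) (|2*Di+1|-1)) (|2*Ci+1|-1) := by
      show max (max (|B (x,y) - C (x,y) + D (x,y)|) (|B (x,y) + C (x,y) + D (x,y) + 1| - 1))
        (|-B (x,y) + C (x,y) + D (x,y) + 1| - 1) = _
      rw [hBB, hCx, hDx,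
        show Di - Ci - Ci + Di = 2*(Di-Ci) from by ring,
        show Di - Ci + Ci + Di + 1 = 2*Di+1 from by ring,
        show -(Di - Ci) + Ci + Di + 1 = 2*Ci+1 from by ring]
    obtain ⟨w, hw⟩ := hE
    have hw0 : 0 ≤ w := by omega
    have ht : ((w.toNat : ℤ)) = w := Int.toNat_of_nonneg hw0
    have hmax : max (max (|2*(Di-Ci)|) (|2*Di+1|-1)) (|2*Ci+1|-1) = 2*(w.toNat:ℤ) := by
      rw [← hVeven]; omega
    obtain ⟨si, s0, s1, hsring⟩ := ringE_mem w.toNat Ci Di hmax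
    have hstate : EvenSt w.toNat si βr δr (x/2 - Real.sqrt 3*y/6, x/2 + Real.sqrt 3*y/6) := by
      refine ⟨?_, ?_, hβ0, hβ1, hδ0, hδ1, hreg.1, hreg.2⟩
      · rw [hsring]
        show x/2 + Real.sqrt 3*y/6 - (x/2 - Real.sqrt 3*y/6) = (Ci:ℝ) + βr
        rw [hβr]; ring
      · rw [hsring]
        show x/2 + Real.sqrt 3*y/6 = (Di:ℝ) + δr
        rw [hδr]; ring
    have key := evenSt_period w.toNat si s0 s1 βr δr _ hstate
    have hc9 : 9 * c + 6 = 18 * w.toNat + 6 := by omega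
    rw [hxyp]
    rw [F_iter_conj (9*c+6) (x/2 - Real.sqrt 3*y/6, x/2 + Real.sqrt 3*y/6), hc9, key]
  have P2 : Odd (V (x, y)) → F^[18 * c + 12] (x, y) = (x, y) := by
    intro hO
    obtain ⟨w, hwO⟩ := hO
    have hw0 : 0 ≤ w := by omega
    have hu : (((w+1).toNat : ℤ)) = w + 1 := Int.toNat_of_nonneg (by omega)
    have hu1 : 1 ≤ (w+1).toNat := by omega
    rcases lt_trichotomy (βr - δr) (-(1/2)) with hr'|hr'|hr'
    · -- region M
      have harg : (3*x - Real.sqrt 3*y + 3)/6 = ((Di - Ci + 1 : ℤ):ℝ) + (δr - βr - 1/2) := by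
        rw [hβr, hδr]; push_cast; ring
      have hBB : B (x, y) = Di - Ci + 1 := by
        show ⌊(3 * x - Real.sqrt 3 * y + 3) / 6⌋ = Di - Ci + 1
        rw [harg, floor_int_add_eq (Di - Ci + 1) (δr - βr - 1/2) (by linarith) (by linarith)]
      have hVM : V (x, y) = max (max (|2*(Di-Ci)+1|) (|2*Di+2|-1)) (|2*Ci|-1) := by
        show max (max (|B (x,y) - C (x,y) + D (x,y)|) (|B (x,y) + C (x,y) + D (x,y) + 1| - 1))
          (|-B (x,y) + C (x,y) + D (x,y) + 1| - 1) = _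
        rw [hBB, hCx, hDx,
          show Di - Ci + 1 - Ci + Di = 2*(Di-Ci)+1 from by ring,
          show Di - Ci + 1 + Ci + Di + 1 = 2*Di+2 from by ring,
          show -(Di - Ci + 1) + Ci + Di + 1 = 2*Ci from by ring]
      have hmax : max (max (|2*(Di-Ci)+1|) (|2*Di+2|-1)) (|2*Ci|-1) = 2*(((w+1).toNat):ℤ)-1 := by
        rw [← hVM]; omega
      obtain ⟨si, s0, s1, hsring⟩ := ringM_mem (w+1).toNat hu1 Ci Di hmax
      have hstate : OddM (w+1).toNat si βr δr (x/2 - Real.sqrt 3*y/6, x/2 + Real.sqrt 3*y/6) := by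
        refine ⟨?_, ?_, hβ0, hβ1, hδ0, hδ1, hr'⟩
        · rw [hsring]
          show x/2 + Real.sqrt 3*y/6 - (x/2 - Real.sqrt 3*y/6) = (Ci:ℝ) + βr
          rw [hβr]; ring
        · rw [hsring]
          show x/2 + Real.sqrt 3*y/6 = (Di:ℝ) + δr
          rw [hδr]; ring
      have key := oddM_period (w+1).toNat hu1 si s0 s1 βr δr _ hstate
      have hc18 : 18 * c + 12 = 36 * (w+1).toNat - 6 := by omega
      rw [hxyp]
      rw [F_iter_conj (18*c+12) (x/2 - Real.sqrt 3*y/6, x/2 + Real.sqrt 3*y/6), hc18, key]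
    · exact absurd hr' hne2
    · rcases lt_trichotomy (βr - δr) (1/2) with hr''|hr''|hr''
      · -- R0 region: contradiction with oddness
        exfalso
        have harg : (3*x - Real.sqrt 3*y + 3)/6 = ((Di - Ci : ℤ):ℝ) + (δr - βr + 1/2) := by
          rw [hβr, hδr]; push_cast; ring
        have hBB : B (x, y) = Di - Ci := by
          show ⌊(3 * x - Real.sqrt 3 * y + 3) / 6⌋ = Di - Ci
          rw [harg, floor_int_add_eq (Di - Ci) (δr - βr + 1/2) (by linarith) (by linarith)]
        have hVeven : V (x, y) = max (max (|2*(Di-Ci)|) (|2*Di+1|-1)) (|2*Ci+1|-1) := by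
          show max (max (|B (x,y) - C (x,y) + D (x,y)|) (|B (x,y) + C (x,y) + D (x,y) + 1| - 1))
            (|-B (x,y) + C (x,y) + D (x,y) + 1| - 1) = _
          rw [hBB, hCx, hDx,
            show Di - Ci - Ci + Di = 2*(Di-Ci) from by ring,
            show Di - Ci + Ci + Di + 1 = 2*Di+1 from by ring,
            show -(Di - Ci) + Ci + Di + 1 = 2*Ci+1 from by ring]
        have heven : Even (V (x, y)) := by
          rw [hVeven]
          rcases max_choice (max (|2*(Di-Ci)|) (|2*Di+1|-1)) (|2*Ci+1|-1) with h1|h1 <;> rw [h1]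
          · rcases max_choice (|2*(Di-Ci)|) (|2*Di+1|-1) with h2|h2 <;> rw [h2]
            · rcases abs_choice (2*(Di-Ci)) with e|e <;> rw [e]
              exacts [⟨Di-Ci, by ring⟩, ⟨-(Di-Ci), by ring⟩]
            · rcases abs_choice (2*Di+1) with e|e <;> rw [e]
              exacts [⟨Di, by ring⟩, ⟨-Di-1, by ring⟩]
          · rcases abs_choice (2*Ci+1) with e|e <;> rw [e]
            exacts [⟨Ci, by ring⟩, ⟨-Ci-1, by ring⟩]
        rw [← Int.not_odd_iff_even] at heven
        exact heven ⟨w, hwO⟩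
      · exact absurd hr'' hne1
      · -- region P
        have harg : (3*x - Real.sqrt 3*y + 3)/6 = ((Di - Ci - 1 : ℤ):ℝ) + (δr - βr + 3/2) := by
          rw [hβr, hδr]; push_cast; ring
        have hBB : B (x, y) = Di - Ci - 1 := by
          show ⌊(3 * x - Real.sqrt 3 * y + 3) / 6⌋ = Di - Ci - 1
          rw [harg, floor_int_add_eq (Di - Ci - 1) (δr - βr + 3/2) (by linarith) (by linarith)]
        have hVP : V (x, y) = max (max (|2*(Di-Ci)-1|) (|2*Di|-1)) (|2*Ci+2|-1) := by
          show max (max (|B (x,y) - C (x,y) + D (x,y)|) (|B (x,y) + C (x,y) + D (x,y) + 1| - 1))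
            (|-B (x,y) + C (x,y) + D (x,y) + 1| - 1) = _
          rw [hBB, hCx, hDx,
            show Di - Ci - 1 - Ci + Di = 2*(Di-Ci)-1 from by ring,
            show Di - Ci - 1 + Ci + Di + 1 = 2*Di from by ring,
            show -(Di - Ci - 1) + Ci + Di + 1 = 2*Ci+2 from by ring]
        have hmax : max (max (|2*(Di-Ci)-1|) (|2*Di|-1)) (|2*Ci+2|-1) = 2*(((w+1).toNat):ℤ)-1 := by
          rw [← hVP]; omega
        obtain ⟨si, s0, s1, hsring⟩ := ringP_mem (w+1).toNat hu1 Ci Di hmax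
        have hstate : OddP (w+1).toNat si βr δr (x/2 - Real.sqrt 3*y/6, x/2 + Real.sqrt 3*y/6) := by
          refine ⟨?_, ?_, hβ0, hβ1, hδ0, hδ1, hr''⟩
          · rw [hsring]
            show x/2 + Real.sqrt 3*y/6 - (x/2 - Real.sqrt 3*y/6) = (Ci:ℝ) + βr
            rw [hβr]; ring
          · rw [hsring]
            show x/2 + Real.sqrt 3*y/6 = (Di:ℝ) + δr
            rw [hδr]; ring
        have key := oddP_period (w+1).toNat hu1 si s0 s1 βr δr _ hstate
        have hc18 : 18 * c + 12 = 36 * (w+1).toNat - 6 := by omega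
        rw [hxyp]
        rw [F_iter_conj (18*c+12) (x/2 - Real.sqrt 3*y/6, x/2 + Real.sqrt 3*y/6), hc18, key]
  refine ⟨P1, P2, ?_⟩
  rcases Int.even_or_odd (V (x, y)) with he|ho
  · exact ⟨9*c+6, by omega, P1 he⟩
  · exact ⟨18*c+12, by omega, P2 ho⟩
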